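/- Let (X,Y,Z) be distributed over the finite set 𝒳×𝒴×𝒵 according to a PMF P. Then min over guessing functions for X given (Y,Z) of E[G(X|Y,Z)^ρ] ≥ E[⌈G*(X|Y)/|𝒵|⌉^ρ], where G* is a guessing function for X given Y minimizing E[G(X|Y)^ρ] (i.e., one that for each y orders the elements of 𝒳 in decreasing order of P_{X,Y}(x,y)). -/

import Mathlib

open Real Finset Filter
open scoped Classical

noncomputable section

/-- `G` is a guessing function for `𝒳` given side-information in `W`: for each
side-information value `w`, `x ↦ G x w` is a bijection from `𝒳` onto `{1, …, |𝒳|}`. -/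
def IsGuessing {𝒳 W : Type*} [Fintype 𝒳] (G : 𝒳 → W → ℕ) : Prop :=
  ∀ w : W, (Function.Injective fun x => G x w) ∧
    ∀ x, G x w ∈ Finset.Icc 1 (Fintype.card 𝒳)

/-- `P` is a probability mass function on `𝒳 × 𝒴` (written in curried form). -/
def IsPMF {𝒳 𝒴 : Type*} [Fintype 𝒳] [Fintype 𝒴] (P : 𝒳 → 𝒴 → ℝ) : Prop :=
  (∀ x y, 0 ≤ P x y) ∧ ∑ x, ∑ y, P x y = 1

/-- `Q` is a conditional PMF on `M` given `(x, y)`. -/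
def IsCondPMF {𝒳 𝒴 M : Type*} [Fintype M] (Q : 𝒳 → 𝒴 → M → ℝ) : Prop :=
  ∀ x y, (∀ m, 0 ≤ Q x y m) ∧ ∑ m, Q x y m = 1

/-- Conditional Rényi entropy of order `α` (base-2 logarithms). -/
def condRenyi {𝒳 𝒴 : Type*} [Fintype 𝒳] [Fintype 𝒴] (α : ℝ) (P : 𝒳 → 𝒴 → ℝ) : ℝ :=
  (α / (1 - α)) * Real.logb 2 (∑ y, (∑ x, P x y ^ α) ^ (1 / α))

/-- Bob's guessing ambiguity: the least `ρ`-th guessing moment over guessing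
functions for `X` given `(Y, M₁, M₂)`. -/
def bobGuessAmb {𝒳 𝒴 M₁ M₂ : Type*} [Fintype 𝒳] [Fintype 𝒴] [Fintype M₁] [Fintype M₂]
    (ρ : ℝ) (P : 𝒳 → 𝒴 → ℝ) (Q : 𝒳 → 𝒴 → M₁ × M₂ → ℝ) : ℝ :=
  sInf { e | ∃ G : 𝒳 → 𝒴 × M₁ × M₂ → ℕ, IsGuessing G ∧
    e = ∑ x, ∑ y, ∑ m : M₁ × M₂, P x y * Q x y m * (G x (y, m) : ℝ) ^ ρ }

/-- Eve's ambiguity: the least `ρ`-th moment of the minimum of two guessing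
functions, one for `X` given `(Y, M₁)` and one for `X` given `(Y, M₂)`. -/
def eveAmb {𝒳 𝒴 M₁ M₂ : Type*} [Fintype 𝒳] [Fintype 𝒴] [Fintype M₁] [Fintype M₂]
    (ρ : ℝ) (P : 𝒳 → 𝒴 → ℝ) (Q : 𝒳 → 𝒴 → M₁ × M₂ → ℝ) : ℝ :=
  sInf { e | ∃ G₁ : 𝒳 → 𝒴 × M₁ → ℕ, ∃ G₂ : 𝒳 → 𝒴 × M₂ → ℕ,
    IsGuessing G₁ ∧ IsGuessing G₂ ∧
    e = ∑ x, ∑ y, ∑ m : M₁ × M₂, P x y * Q x y m *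
      ((min (G₁ x (y, m.1)) (G₂ x (y, m.2)) : ℕ) : ℝ) ^ ρ }

/-- Bob's list ambiguity: the `ρ`-th moment of the size of the list of all `x`
with positive posterior probability given `(Y, M₁, M₂)`. -/
def bobListAmb {𝒳 𝒴 M₁ M₂ : Type*} [Fintype 𝒳] [Fintype 𝒴] [Fintype M₁] [Fintype M₂]
    (ρ : ℝ) (P : 𝒳 → 𝒴 → ℝ) (Q : 𝒳 → 𝒴 → M₁ × M₂ → ℝ) : ℝ :=
  ∑ x, ∑ y, ∑ m : M₁ × M₂, P x y * Q x y m *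
    ((Finset.univ.filter fun x' => 0 < P x' y * Q x' y m).card : ℝ) ^ ρ
lemma exists_rank {𝒳 : Type*} [Fintype 𝒳] [Nonempty 𝒳] (m : 𝒳 → ℕ) :
    ∃ g : 𝒳 → ℕ, Function.Injective g ∧ (∀ x, g x ∈ Finset.Icc 1 (Fintype.card 𝒳)) ∧
      (∀ x, (Finset.univ.filter fun x' => g x' ≤ g x).card = g x) ∧
      (∀ x x', g x' ≤ g x → m x' ≤ m x) := by
  set n := Fintype.card 𝒳 with hn
  have hn0 : 0 < n := Fintype.card_pos
  set tb : 𝒳 → ℕ := fun x => (Fintype.equivFin 𝒳 x : ℕ) with htb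
  have htbinj : Function.Injective tb := fun a b h =>
    (Fintype.equivFin 𝒳).injective (Fin.val_injective h)
  have htblt : ∀ x, tb x < n := fun x => (Fintype.equivFin 𝒳 x).isLt
  set key : 𝒳 → ℕ := fun x => tb x + n * m x with hkey
  have hdiv : ∀ x, key x / n = m x := by
    intro x
    simp only [hkey]
    rw [Nat.add_mul_div_left _ _ hn0, Nat.div_eq_of_lt (htblt x), Nat.zero_add]
  have hkeyinj : Function.Injective key := by
    intro a b h
    have hm : m a = m b := by rw [← hdiv a, ← hdiv b, h]
    apply htbinj
    simp only [hkey, hm] at h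
    omega
  have hkeym : ∀ x x', key x' ≤ key x → m x' ≤ m x := by
    intro x x' h
    rw [← hdiv x, ← hdiv x']
    exact Nat.div_le_div_right h
  set g : 𝒳 → ℕ := fun x => (Finset.univ.filter fun x' => key x' ≤ key x).card with hg
  have hmono : ∀ x x', key x' ≤ key x → g x' ≤ g x := by
    intro x x' h
    apply Finset.card_le_card
    intro a ha
    simp only [Finset.mem_filter, Finset.mem_univ, true_and] at ha ⊢
    exact le_trans ha h
  have hstrict : ∀ x x', key x < key x' → g x < g x' := by
    intro x x' h
    apply Finset.card_lt_card
    constructor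
    · intro a ha
      simp only [Finset.mem_filter, Finset.mem_univ, true_and] at ha ⊢
      exact le_trans ha h.le
    · intro hsub
      have : x' ∈ Finset.univ.filter fun a => key a ≤ key x' := by simp
      have hx' := hsub this
      simp only [Finset.mem_filter, Finset.mem_univ, true_and] at hx'
      omega
  have hrev : ∀ x x', g x' ≤ g x → key x' ≤ key x := by
    intro x x' h
    by_contra hc
    exact absurd h (not_le.mpr (hstrict x x' (not_le.mp hc)))
  refine ⟨g, ?_, ?_, ?_, fun x x' h => hkeym x x' (hrev x x' h)⟩
  · intro a b h
    exact hkeyinj (le_antisymm (hrev b a h.le) (hrev a b h.ge))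
  · intro x
    rw [Finset.mem_Icc]
    constructor
    · exact Finset.card_pos.mpr ⟨x, by simp⟩
    · exact le_trans (Finset.card_filter_le _ _) (by simp [hn])
  · intro x
    have : (Finset.univ.filter fun x' => g x' ≤ g x) =
        (Finset.univ.filter fun x' => key x' ≤ key x) := by
      ext a
      simp only [Finset.mem_filter, Finset.mem_univ, true_and]
      exact ⟨fun h => hrev x a h, fun h => hmono x a h⟩
    rw [this]

lemma rearr_aux {𝒳 : Type*} [Fintype 𝒳] (p : 𝒳 → ℝ) (f : ℕ → ℝ) (hf : Monotone f)
    (a b : 𝒳 → ℕ) (ha : Function.Injective a) (hb : Function.Injective b)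
    (haI : ∀ x, a x ∈ Finset.Icc 1 (Fintype.card 𝒳))
    (hbI : ∀ x, b x ∈ Finset.Icc 1 (Fintype.card 𝒳))
    (hanti : ∀ x x', p x < p x' → a x' < a x) :
    ∑ x, p x * f (a x) ≤ ∑ x, p x * f (b x) := by
  set n := Fintype.card 𝒳 with hn
  have hcard : Fintype.card ↥(Finset.Icc 1 n) = n := by
    rw [Fintype.card_coe, Nat.card_Icc]; omega
  have hA : Function.Bijective (fun x => (⟨a x, haI x⟩ : ↥(Finset.Icc 1 n))) := by
    rw [Fintype.bijective_iff_injective_and_card]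
    exact ⟨fun u v h => ha (congrArg Subtype.val h), by rw [hcard]⟩
  have hB : Function.Bijective (fun x => (⟨b x, hbI x⟩ : ↥(Finset.Icc 1 n))) := by
    rw [Fintype.bijective_iff_injective_and_card]
    exact ⟨fun u v h => hb (congrArg Subtype.val h), by rw [hcard]⟩
  set eA := Equiv.ofBijective _ hA
  set eB := Equiv.ofBijective _ hB
  set τ : Equiv.Perm 𝒳 := eB.trans eA.symm with hτ
  have hab : ∀ x, a (τ x) = b x := by
    intro x
    have h1 : a (τ x) = (eA (τ x)).val := rfl
    rw [h1]
    show (eA (eA.symm (eB x))).val = b x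
    rw [eA.apply_symm_apply]
    rfl
  have hAnti : Antivary (fun x => f (a x)) p := by
    intro i j hij
    exact hf (hanti i j hij).le
  have := hAnti.sum_smul_le_sum_comp_perm_smul (σ := τ)
  simp only [smul_eq_mul] at this
  calc ∑ x, p x * f (a x) = ∑ x, f (a x) * p x := by simp [mul_comm]
    _ ≤ ∑ x, f (a (τ x)) * p x := this
    _ = ∑ x, p x * f (b x) := by simp [hab, mul_comm]

theorem sideInfo_improves_guessing_lower_bound
    {𝒳 𝒴 𝒵 : Type*} [Fintype 𝒳] [Fintype 𝒴] [Fintype 𝒵]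
    [Nonempty 𝒳] [Nonempty 𝒴] [Nonempty 𝒵]
    (ρ : ℝ) (hρ : 0 < ρ) (P : 𝒳 → 𝒴 → 𝒵 → ℝ)
    (hP : (∀ x y z, 0 ≤ P x y z) ∧ ∑ x, ∑ y, ∑ z, P x y z = 1)
    (Gopt : 𝒳 → 𝒴 → ℕ) (hGopt : IsGuessing Gopt)
    (hGoptMin : ∀ G' : 𝒳 → 𝒴 → ℕ, IsGuessing G' →
      ∑ x, ∑ y, ∑ z, P x y z * (Gopt x y : ℝ) ^ ρ ≤
        ∑ x, ∑ y, ∑ z, P x y z * (G' x y : ℝ) ^ ρ) :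
    ∀ G : 𝒳 → 𝒴 × 𝒵 → ℕ, IsGuessing G →
      ∑ x, ∑ y, ∑ z, P x y z *
          ((⌈(Gopt x y : ℝ) / (Fintype.card 𝒵 : ℝ)⌉ : ℝ)) ^ ρ ≤
        ∑ x, ∑ y, ∑ z, P x y z * (G x (y, z) : ℝ) ^ ρ := by
  intro G hG
  obtain ⟨hP0, hP1⟩ := hP
  set N := Fintype.card 𝒵 with hN
  have hN0 : 0 < N := Fintype.card_pos
  have hNR : (0:ℝ) < (N:ℝ) := by exact_mod_cast hN0
  set f : ℕ → ℝ := fun k => ((⌈(k:ℝ)/(N:ℝ)⌉ : ℤ) : ℝ) ^ ρ with hf_def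
  have hceil_nonneg : ∀ k : ℕ, (0:ℝ) ≤ ((⌈(k:ℝ)/(N:ℝ)⌉ : ℤ) : ℝ) := by
    intro k
    have : (0:ℝ) ≤ (k:ℝ)/(N:ℝ) := div_nonneg (Nat.cast_nonneg k) hNR.le
    exact_mod_cast Int.ceil_nonneg this
  have hf_mono : Monotone f := by
    intro k k' hk
    apply Real.rpow_le_rpow (hceil_nonneg k) _ hρ.le
    have h1 : (k:ℝ)/(N:ℝ) ≤ (k':ℝ)/(N:ℝ) := by
      have := (Nat.cast_le (α := ℝ)).mpr hk
      gcongr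
    exact_mod_cast Int.ceil_le_ceil h1
  -- marginals
  set q : 𝒳 → 𝒴 → ℝ := fun x y => ∑ z, P x y z with hq_def
  have hq0 : ∀ x y, 0 ≤ q x y := fun x y => Finset.sum_nonneg fun z _ => hP0 x y z
  -- triple sum rewriting
  have keysum : ∀ (C : 𝒳 → 𝒴 → ℝ),
      (∑ x, ∑ y, ∑ z, P x y z * C x y) = ∑ y, ∑ x, q x y * C x y := by
    intro C
    rw [Finset.sum_comm]
    refine Finset.sum_congr rfl fun y _ => Finset.sum_congr rfl fun x _ => ?_
    rw [hq_def, Finset.sum_mul]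
  -- swap argument: Gopt is antitone w.r.t. q
  have hanti : ∀ y x1 x2, q x1 y < q x2 y → Gopt x2 y < Gopt x1 y := by
    intro y x1 x2 hlt
    by_contra hc
    push_neg at hc
    have hne : x1 ≠ x2 := fun h => absurd hlt (by rw [h]; exact lt_irrefl _)
    have hltG : Gopt x1 y < Gopt x2 y :=
      lt_of_le_of_ne hc fun h => hne ((hGopt y).1 h)
    set G' : 𝒳 → 𝒴 → ℕ := fun x y' =>
      if y' = y then Gopt (Equiv.swap x1 x2 x) y' else Gopt x y' with hG'_def
    have hG' : IsGuessing G' := by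
      intro w
      by_cases hw : w = y
      · subst hw
        constructor
        · intro a b h
          simp only [hG'_def, if_pos rfl] at h
          exact (Equiv.swap x1 x2).injective ((hGopt w).1 h)
        · intro x
          simp only [hG'_def, if_pos rfl]
          exact (hGopt w).2 _
      · constructor
        · intro a b h
          simp only [hG'_def, if_neg hw] at h
          exact (hGopt w).1 h
        · intro x
          simp only [hG'_def, if_neg hw]
          exact (hGopt w).2 _
    have hmin := hGoptMin G' hG'
    rw [keysum (fun x y' => (Gopt x y' : ℝ) ^ ρ), keysum (fun x y' => (G' x y' : ℝ) ^ ρ)] at hmin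
    set σ := Equiv.swap x1 x2 with hσ
    have hAlt : ((Gopt x1 y : ℝ)) ^ ρ < ((Gopt x2 y : ℝ)) ^ ρ :=
      Real.rpow_lt_rpow (Nat.cast_nonneg _) (by exact_mod_cast hltG) hρ
    have hre : ∑ x, q x y * ((G' x y : ℝ)) ^ ρ
        = ∑ x, q (σ x) y * ((Gopt x y : ℝ)) ^ ρ := by
      rw [← Equiv.sum_comp σ (fun x => q (σ x) y * ((Gopt x y : ℝ)) ^ ρ)]
      refine Finset.sum_congr rfl fun x _ => ?_
      simp only [hG'_def, if_pos rfl, hσ, Equiv.swap_apply_self]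
    have hstrict_y : (∑ x, q x y * ((G' x y : ℝ)) ^ ρ) <
        ∑ x, q x y * ((Gopt x y : ℝ)) ^ ρ := by
      rw [hre, ← sub_pos, ← Finset.sum_sub_distrib]
      have hzero : ∀ x ∈ Finset.univ, x ∉ ({x1, x2} : Finset 𝒳) →
          q x y * ((Gopt x y : ℝ)) ^ ρ - q (σ x) y * ((Gopt x y : ℝ)) ^ ρ = 0 := by
        intro x _ hx
        simp only [Finset.mem_insert, Finset.mem_singleton, not_or] at hx
        rw [hσ, Equiv.swap_apply_of_ne_of_ne hx.1 hx.2, sub_self]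
      rw [← Finset.sum_subset (Finset.subset_univ ({x1, x2} : Finset 𝒳)) hzero,
        Finset.sum_pair hne]
      have h1 : σ x1 = x2 := Equiv.swap_apply_left x1 x2
      have h2 : σ x2 = x1 := Equiv.swap_apply_right x1 x2
      rw [h1, h2]
      nlinarith [mul_pos (sub_pos.mpr hlt) (sub_pos.mpr hAlt)]
    have hstrict : (∑ y', ∑ x, q x y' * (G' x y' : ℝ) ^ ρ) <
        ∑ y', ∑ x, q x y' * (Gopt x y' : ℝ) ^ ρ := by
      apply Finset.sum_lt_sum
      · intro y' _
        by_cases hy' : y' = y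
        · subst hy'
          exact hstrict_y.le
        · apply le_of_eq
          refine Finset.sum_congr rfl fun x _ => ?_
          simp only [hG'_def, if_neg hy']
      · exact ⟨y, Finset.mem_univ y, hstrict_y⟩
    exact absurd hmin (not_le.mpr hstrict)
  -- construct from G a guessing function on 𝒴 alone
  set m : 𝒴 → 𝒳 → ℕ := fun y x => Finset.univ.inf' Finset.univ_nonempty
    (fun z => G x (y, z)) with hm_def
  have hm_le : ∀ y x z, m y x ≤ G x (y, z) := fun y x z =>
    Finset.inf'_le _ (Finset.mem_univ z)
  choose g hg_inj hg_mem hg_card hg_mono using fun y => exists_rank (m y)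
  -- the counting bound
  have hcount : ∀ y x, g y x ≤ N * m y x := by
    intro y x
    have hx' : ∀ x', ∃ z, G x' (y, z) = m y x' := by
      intro x'
      obtain ⟨z, _, hz⟩ := Finset.exists_mem_eq_inf' Finset.univ_nonempty
        (fun z => G x' (y, z))
      exact ⟨z, hz.symm⟩
    choose zf hzf using hx'
    have hcardS := hg_card y x
    have hle : (Finset.univ.filter fun x' => g y x' ≤ g y x).card ≤
        ((Finset.univ : Finset 𝒵) ×ˢ Finset.Icc 1 (m y x)).card := by
      apply Finset.card_le_card_of_injOn (fun x' => ((zf x', G x' (y, zf x')) : 𝒵 × ℕ))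
      · intro x' hx'mem
        simp only [Finset.mem_coe, Finset.mem_filter, Finset.mem_univ, true_and] at hx'mem
        rw [Finset.mem_coe, Finset.mem_product, Finset.mem_Icc]
        refine ⟨Finset.mem_univ _, ?_, ?_⟩
        · have := (hG (y, zf x')).2 x'
          rw [Finset.mem_Icc] at this
          exact this.1
        · beta_reduce
          rw [hzf x']
          exact hg_mono y x x' hx'mem
      · intro a _ b _ hab
        simp only [Prod.mk.injEq] at hab
        obtain ⟨h1, h2⟩ := hab
        rw [h1] at h2
        exact (hG (y, zf b)).1 h2
    rw [hcardS, Finset.card_product, Finset.card_univ, Nat.card_Icc] at hle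
    have he : m y x + 1 - 1 = m y x := by omega
    rwa [he] at hle
  have hceil : ∀ y x, ((⌈(g y x : ℝ) / (N : ℝ)⌉ : ℤ) : ℝ) ≤ (m y x : ℝ) := by
    intro y x
    have h1 : ⌈(g y x : ℝ) / (N : ℝ)⌉ ≤ ((m y x : ℤ)) := by
      rw [Int.ceil_le]
      push_cast
      rw [div_le_iff₀ hNR]
      have := hcount y x
      have : (g y x : ℝ) ≤ (N : ℝ) * (m y x : ℝ) := by exact_mod_cast this
      linarith
    exact_mod_cast h1
  -- chain the inequalities
  have step1 : (∑ x, ∑ y, ∑ z, P x y z * f (Gopt x y)) ≤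
      ∑ x, ∑ y, ∑ z, P x y z * f (g y x) := by
    rw [keysum (fun x y => f (Gopt x y)), keysum (fun x y => f (g y x))]
    apply Finset.sum_le_sum
    intro y _
    exact rearr_aux (fun x => q x y) f hf_mono (fun x => Gopt x y) (g y)
      (hGopt y).1 (hg_inj y) (hGopt y).2 (hg_mem y) (fun x x' h => hanti y x x' h)
  have step2 : (∑ x, ∑ y, ∑ z, P x y z * f (g y x)) ≤
      ∑ x, ∑ y, ∑ z, P x y z * (G x (y, z) : ℝ) ^ ρ := by
    refine Finset.sum_le_sum fun x _ => Finset.sum_le_sum fun y _ =>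
      Finset.sum_le_sum fun z _ => ?_
    apply mul_le_mul_of_nonneg_left _ (hP0 x y z)
    apply Real.rpow_le_rpow (hceil_nonneg _) _ hρ.le
    calc ((⌈(g y x : ℝ) / (N : ℝ)⌉ : ℤ) : ℝ) ≤ (m y x : ℝ) := hceil y x
      _ ≤ (G x (y, z) : ℝ) := by exact_mod_cast hm_le y x z
  exact le_trans step1 step2
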